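/- With the bracket of N_1(n,k): for α, β, γ ∈ GF(2)^n \ {0} all of parity |α| = |β| = |γ| = 1 and pairwise distinct with α + β + γ ≠ 0, the Jacobi identity holds: [e_α,[e_β,e_γ]] + [e_β,[e_γ,e_α]] + [e_γ,[e_α,e_β]] = 0. -/

import Mathlib

/-- Parity `|α|` of the coordinate sum of `α ∈ GF(2)^n`. -/
def par {n : ℕ} (α : Fin n → ZMod 2) : ZMod 2 := ∑ i, α i

/-- Standard inner product `(α, β)` on `GF(2)^n`. -/
def dotp {n : ℕ} (α β : Fin n → ZMod 2) : ZMod 2 := ∑ i, α i * β i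

/-- Structure constant of `N₁(n,k)` on `e_{α+β}`: equal to `1` if `|α| = |β| = 1`,
and to `(α,β)` if `|α| = 0` or `|β| = 0`. -/
noncomputable def cN1 (k : Type*) [Field k] {n : ℕ} (α β : Fin n → ZMod 2) : k :=
  if par α = 1 ∧ par β = 1 then 1 else if dotp α β = 1 then 1 else 0

/-- The bracket of `N₁(n,k)`, defined on the free `k`-module with basis
`{e_α : α ∈ GF(2)^n \ {0}}` (realized as finitely supported functions), extended
bilinearly from `⁅e_α, e_β⁆ = cN1 α β • e_{α+β}` (and `0` when `α + β = 0`). -/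
noncomputable def brN1 {k : Type*} [Field k] {n : ℕ}
    (f g : {v : Fin n → ZMod 2 // v ≠ 0} →₀ k) :
    {v : Fin n → ZMod 2 // v ≠ 0} →₀ k :=
  f.sum fun α a => g.sum fun β b =>
    if h : α.1 + β.1 ≠ 0 then
      Finsupp.single ⟨α.1 + β.1, h⟩ (a * b * cN1 k α.1 β.1)
    else 0

/-- The basis vector `e_α` of `N₁(n,k)`. -/
noncomputable def eN1 (k : Type*) [Field k] {n : ℕ} (α : Fin n → ZMod 2) (h : α ≠ 0) :
    {v : Fin n → ZMod 2 // v ≠ 0} →₀ k :=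
  Finsupp.single ⟨α, h⟩ 1

lemma par_add' {n : ℕ} (α β : Fin n → ZMod 2) : par (α + β) = par α + par β := by
  simp [par, Finset.sum_add_distrib]

lemma dotp_add_right' {n : ℕ} (α β γ : Fin n → ZMod 2) :
    dotp α (β + γ) = dotp α β + dotp α γ := by
  simp [dotp, mul_add, Finset.sum_add_distrib]

lemma dotp_comm' {n : ℕ} (α β : Fin n → ZMod 2) : dotp α β = dotp β α := by
  simp [dotp, mul_comm]

lemma addself' {n : ℕ} (α β : Fin n → ZMod 2) : α + β = 0 ↔ α = β := by
  have key : ∀ x y : ZMod 2, x + y = 0 ↔ x = y := by decide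
  constructor
  · intro h; funext i; exact (key _ _).1 (congrFun h i)
  · intro h; subst h; funext i; exact (key _ _).2 rfl

lemma br_single' {k : Type*} [Field k] {n : ℕ} (α β : Fin n → ZMod 2)
    (hα : α ≠ 0) (hβ : β ≠ 0) (x y : k) :
    brN1 (Finsupp.single ⟨α, hα⟩ x) (Finsupp.single ⟨β, hβ⟩ y) =
      if h : α + β ≠ 0 then Finsupp.single ⟨α + β, h⟩ (x * y * cN1 k α β) else 0 := by
  unfold brN1
  rw [Finsupp.sum_single_index, Finsupp.sum_single_index]
  · split <;> simp
  · rw [Finsupp.sum_single_index] <;> split <;> simp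

lemma key_char2 {k : Type*} [Field k] (hchar : CharP k 2) (x y z : ZMod 2) :
    ((if x + y = 1 then (1:k) else 0) + (if x + z = 1 then (1:k) else 0)
      + (if y + z = 1 then (1:k) else 0)) = 0 := by
  have h2 : (1:k) + 1 = 0 := by
    have := CharP.cast_eq_zero k 2
    rwa [Nat.cast_ofNat, ← one_add_one_eq_two] at this
  fin_cases x <;> fin_cases y <;> fin_cases z <;> simp_all (config := {decide := true})

/-- In `N₁(n,k)`, for pairwise distinct nonzero `α, β, γ ∈ GF(2)^n` of
parity `|α| = |β| = |γ| = 1` with `α + β + γ ≠ 0`, the Jacobi identity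
`⁅e_α,⁅e_β,e_γ⁆⁆ + ⁅e_β,⁅e_γ,e_α⁆⁆ + ⁅e_γ,⁅e_α,e_β⁆⁆ = 0` holds. -/
theorem N1_jacobi_odd_case {n : ℕ} {k : Type*} [Field k] (hchar : CharP k 2)
    (α β γ : Fin n → ZMod 2)
    (hα : α ≠ 0) (hβ : β ≠ 0) (hγ : γ ≠ 0)
    (hpα : par α = 1) (hpβ : par β = 1) (hpγ : par γ = 1)
    (hαβ : α ≠ β) (hβγ : β ≠ γ) (hαγ : α ≠ γ)
    (hsum : α + β + γ ≠ 0) :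
    brN1 (eN1 k α hα) (brN1 (eN1 k β hβ) (eN1 k γ hγ)) +
      brN1 (eN1 k β hβ) (brN1 (eN1 k γ hγ) (eN1 k α hα)) +
      brN1 (eN1 k γ hγ) (brN1 (eN1 k α hα) (eN1 k β hβ)) = 0 := by
  have hbc : β + γ ≠ 0 := fun h => hβγ ((addself' β γ).1 h)
  have hca : γ + α ≠ 0 := fun h => hαγ ((addself' γ α).1 h).symm
  have hab : α + β ≠ 0 := fun h => hαβ ((addself' α β).1 h)
  have h1 : α + (β + γ) ≠ 0 := by rwa [← add_assoc]
  have h2 : β + (γ + α) ≠ 0 := fun h => h1 (by rw [← h]; abel)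
  have h3 : γ + (α + β) ≠ 0 := fun h => h1 (by rw [← h]; abel)
  have e2 : (⟨β + (γ + α), h2⟩ : {v : Fin n → ZMod 2 // v ≠ 0}) = ⟨α + (β + γ), h1⟩ :=
    Subtype.ext (by abel)
  have e3 : (⟨γ + (α + β), h3⟩ : {v : Fin n → ZMod 2 // v ≠ 0}) = ⟨α + (β + γ), h1⟩ :=
    Subtype.ext (by abel)
  unfold eN1
  rw [br_single' β γ hβ hγ, br_single' γ α hγ hα, br_single' α β hα hβ,
    dif_pos hbc, dif_pos hca, dif_pos hab,
    br_single' α (β + γ) hα hbc, br_single' β (γ + α) hβ hca, br_single' γ (α + β) hγ hab,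
    dif_pos h1, dif_pos h2, dif_pos h3, e2, e3,
    ← Finsupp.single_add, ← Finsupp.single_add]
  have hc : ∀ δ ε : Fin n → ZMod 2, par δ = 1 → par ε = 1 → cN1 k δ ε = 1 := by
    intro δ ε hδ hε; simp [cN1, hδ, hε]
  have hmix : ∀ δ ε ζ : Fin n → ZMod 2, par ε = 1 → par ζ = 1 →
      cN1 k δ (ε + ζ) = if dotp δ ε + dotp δ ζ = 1 then (1:k) else 0 := by
    intro δ ε ζ hε hζ
    have : par (ε + ζ) = 0 := by rw [par_add', hε, hζ]; decide
    rw [cN1, dotp_add_right']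
    simp [this]
  rw [hc β γ hpβ hpγ, hc γ α hpγ hpα, hc α β hpα hpβ,
    hmix α β γ hpβ hpγ, hmix β γ α hpγ hpα, hmix γ α β hpα hpβ]
  have := key_char2 hchar (dotp α β) (dotp α γ) (dotp γ β)
  rw [Finsupp.single_eq_zero]
  simp only [one_mul, mul_one]
  rw [dotp_comm' β γ, dotp_comm' β α, dotp_comm' γ α,
    add_comm (dotp γ β) (dotp α β)]
  exact this
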